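/- If X is a real random variable with E[X] = 0 and E[X²] = 1, then for every real x, its distribution satisfies the Kolmogorov bound |P(X < x) - Φ(x)| ≤ sup_{y>0} (Φ(y) - y²/(1+y²)). -/

import Mathlib

open MeasureTheory Set

noncomputable def Phi (x : ℝ) : ℝ :=
  (Real.sqrt (2 * Real.pi))⁻¹ * ∫ t in Set.Iio x, Real.exp (-t ^ 2 / 2)

namespace PhiAux

lemma feq : (fun t : ℝ => Real.exp (-t ^ 2 / 2)) = fun t => Real.exp (-(1/2) * t ^ 2) := by
  funext t; ring_nf

lemma f_int : Integrable (fun t : ℝ => Real.exp (-t ^ 2 / 2)) := by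
  rw [feq]; exact integrable_exp_neg_mul_sq (by norm_num)

lemma gauss_total : ∫ t : ℝ, Real.exp (-t ^ 2 / 2) = Real.sqrt (2 * Real.pi) := by
  rw [feq, integral_gaussian]
  rw [show Real.pi / (1/2) = 2 * Real.pi by ring]

lemma sqrt2pi_pos : 0 < Real.sqrt (2 * Real.pi) := by positivity

lemma Phi_symm (x : ℝ) : Phi x + Phi (-x) = 1 := by
  have key := integral_comp_neg_Iic (-x) (fun t => Real.exp (-t ^ 2 / 2))
  rw [neg_neg] at key
  have h1 : ∫ t in Iio (-x), Real.exp (-t ^ 2 / 2) = ∫ t in Ioi x, Real.exp (-t ^ 2 / 2) := by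
    calc ∫ t in Iio (-x), Real.exp (-t ^ 2 / 2)
        = ∫ t in Iic (-x), Real.exp (-t ^ 2 / 2) := setIntegral_congr_set Iio_ae_eq_Iic
      _ = ∫ t in Iic (-x), Real.exp (-(-t) ^ 2 / 2) := by
          apply setIntegral_congr_fun measurableSet_Iic
          intro t _
          simp [neg_sq]
      _ = ∫ t in Ioi x, Real.exp (-t ^ 2 / 2) := key
  have h2 : (∫ t in Iio x, Real.exp (-t ^ 2 / 2)) + ∫ t in Ioi x, Real.exp (-t ^ 2 / 2)
      = Real.sqrt (2 * Real.pi) := by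
    rw [setIntegral_congr_set Iio_ae_eq_Iic, ← gauss_total]
    exact intervalIntegral.integral_Iic_add_Ioi f_int.integrableOn f_int.integrableOn
  unfold Phi
  rw [h1, ← mul_add, h2, inv_mul_cancel₀ (ne_of_gt sqrt2pi_pos)]

lemma Phi_mono {x y : ℝ} (h : x ≤ y) : Phi x ≤ Phi y := by
  unfold Phi
  apply mul_le_mul_of_nonneg_left _ (le_of_lt (inv_pos.mpr sqrt2pi_pos))
  apply setIntegral_mono_set f_int.integrableOn
  · exact Filter.Eventually.of_forall fun t => le_of_lt (Real.exp_pos _)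
  · exact HasSubset.Subset.eventuallyLE (Iio_subset_Iio h)

lemma Phi_zero : Phi 0 = 1/2 := by
  have := Phi_symm 0
  rw [neg_zero] at this
  linarith

lemma Phi_le_one (x : ℝ) : Phi x ≤ 1 := by
  have h := Phi_symm x
  have : 0 ≤ Phi (-x) := by
    unfold Phi
    apply mul_nonneg (le_of_lt (inv_pos.mpr sqrt2pi_pos))
    exact setIntegral_nonneg measurableSet_Iio fun t _ => le_of_lt (Real.exp_pos _)
  linarith

lemma Phi_nonneg (x : ℝ) : 0 ≤ Phi x := by
  unfold Phi
  apply mul_nonneg (le_of_lt (inv_pos.mpr sqrt2pi_pos))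
  exact setIntegral_nonneg measurableSet_Iio fun t _ => le_of_lt (Real.exp_pos _)

/-- lower bound: Phi z ≥ 1/2 + z * exp(-z^2/2)/√(2π) for z ≥ 0 -/
lemma Phi_lb {z : ℝ} (hz : 0 ≤ z) :
    1/2 + z * Real.exp (-z ^ 2 / 2) / Real.sqrt (2 * Real.pi) ≤ Phi z := by
  have hsplit : (∫ t in Iio z, Real.exp (-t ^ 2 / 2))
      = (∫ t in Iio 0, Real.exp (-t ^ 2 / 2)) + ∫ t in Ico 0 z, Real.exp (-t ^ 2 / 2) := by
    have hdisj : Disjoint (Iio (0:ℝ)) (Ico 0 z) :=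
      Set.disjoint_left.mpr fun t ht h => absurd ht (not_lt.mpr h.1)
    rw [← setIntegral_union hdisj measurableSet_Ico
      f_int.integrableOn f_int.integrableOn, Iio_union_Ico_eq_Iio hz]
  have hlb : z * Real.exp (-z ^ 2 / 2) ≤ ∫ t in Ico 0 z, Real.exp (-t ^ 2 / 2) := by
    have : ∫ t in Ico 0 z, Real.exp (-z ^ 2 / 2) ≤ ∫ t in Ico 0 z, Real.exp (-t ^ 2 / 2) := by
      apply setIntegral_mono_on (integrable_const _) f_int.integrableOn measurableSet_Ico
      intro t ht
      apply Real.exp_le_exp.mpr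
      have h1 : t ^ 2 ≤ z ^ 2 := by nlinarith [ht.1, ht.2]
      linarith
    calc z * Real.exp (-z ^ 2 / 2)
        = ∫ _ in Ico 0 z, Real.exp (-z ^ 2 / 2) := by
          rw [setIntegral_const, measureReal_def, Real.volume_Ico,
            ENNReal.toReal_ofReal (by linarith), smul_eq_mul]
          ring
      _ ≤ _ := this
  have hzero : Phi 0 = 1/2 := Phi_zero
  unfold Phi at hzero ⊢
  rw [hsplit, mul_add]
  rw [hzero]
  have : (Real.sqrt (2 * Real.pi))⁻¹ * (z * Real.exp (-z ^ 2 / 2))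
      ≤ (Real.sqrt (2 * Real.pi))⁻¹ * ∫ t in Ico 0 z, Real.exp (-t ^ 2 / 2) :=
    mul_le_mul_of_nonneg_left hlb (le_of_lt (inv_pos.mpr sqrt2pi_pos))
  calc 1/2 + z * Real.exp (-z ^ 2 / 2) / Real.sqrt (2 * Real.pi)
      = 1/2 + (Real.sqrt (2 * Real.pi))⁻¹ * (z * Real.exp (-z ^ 2 / 2)) := by ring
    _ ≤ _ := by linarith

/-- the sup set is bounded above by 1 -/
lemma bddAbove_S : BddAbove {y : ℝ | ∃ z > 0, y = Phi z - z ^ 2 / (1 + z ^ 2)} := by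
  refine ⟨1, fun y hy => ?_⟩
  obtain ⟨z, hz, rfl⟩ := hy
  have h1 : Phi z ≤ 1 := Phi_le_one z
  have h2 : 0 ≤ z ^ 2 / (1 + z ^ 2) := by positivity
  linarith

lemma sSup_ge_half :
    1/2 ≤ sSup {y : ℝ | ∃ z > 0, y = Phi z - z ^ 2 / (1 + z ^ 2)} := by
  have hmem : Phi (1/10) - (1/10 : ℝ) ^ 2 / (1 + (1/10 : ℝ) ^ 2) ∈
      {y : ℝ | ∃ z > 0, y = Phi z - z ^ 2 / (1 + z ^ 2)} :=
    ⟨1/10, by norm_num, rfl⟩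
  have hge : 1/2 ≤ Phi (1/10) - (1/10 : ℝ) ^ 2 / (1 + (1/10 : ℝ) ^ 2) := by
    have hlb := Phi_lb (z := 1/10) (by norm_num)
    have hexp : (0.995 : ℝ) ≤ Real.exp (-(1/10 : ℝ) ^ 2 / 2) := by
      have := Real.add_one_le_exp (-(1/10 : ℝ) ^ 2 / 2)
      linarith
    have hsqrt : Real.sqrt (2 * Real.pi) ≤ 2.51 := by
      rw [show (2.51 : ℝ) = Real.sqrt (2.51 ^ 2) by rw [Real.sqrt_sq]; norm_num]
      apply Real.sqrt_le_sqrt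
      nlinarith [Real.pi_lt_d2, Real.pi_pos]
    have h1 : (1/10 : ℝ) * 0.995 / 2.51 ≤
        (1/10 : ℝ) * Real.exp (-(1/10 : ℝ) ^ 2 / 2) / Real.sqrt (2 * Real.pi) := by
      apply div_le_div₀ (by positivity) (by nlinarith) sqrt2pi_pos hsqrt
    have h2 : ((1/10 : ℝ) ^ 2 / (1 + (1/10 : ℝ) ^ 2)) = 1/101 := by norm_num
    rw [h2]
    have : (1/10 : ℝ) * 0.995 / 2.51 ≥ 1/101 + 0.0001 := by norm_num
    linarith
  exact le_trans hge (le_csSup bddAbove_S hmem)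

/-- Cantelli's inequality -/
lemma cantelli {Ω : Type*} [MeasureSpace Ω] (μ : Measure Ω) [IsProbabilityMeasure μ]
    (X : Ω → ℝ) (hXm : Measurable X)
    (hX : Integrable X μ) (hmean : ∫ ω, X ω ∂μ = 0)
    (hX2 : Integrable (fun ω => X ω ^ 2) μ) (hvar : ∫ ω, X ω ^ 2 ∂μ = 1)
    {x : ℝ} (hx : 0 < x) :
    (μ {ω | x ≤ X ω}).toReal ≤ 1 / (1 + x ^ 2) := by
  set t : ℝ := 1 / x with ht
  have htpos : 0 < t := by positivity
  set g : Ω → ℝ := fun ω => (X ω + t) ^ 2 with hg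
  have hg_int : Integrable g μ := by
    have : g = fun ω => X ω ^ 2 + (2 * t) * X ω + t ^ 2 := by
      funext ω; simp only [g]; ring
    rw [this]
    exact ((hX2.add (hX.const_mul (2 * t))).add (integrable_const _))
  have hg_val : ∫ ω, g ω ∂μ = 1 + t ^ 2 := by
    have : ∫ ω, g ω ∂μ = ∫ ω, (X ω ^ 2 + (2 * t) * X ω + t ^ 2) ∂μ := by
      congr 1; funext ω; simp only [g]; ring
    have h1 : Integrable (fun ω => 2 * t * X ω) μ := hX.const_mul _
    have h2 : Integrable (fun ω => X ω ^ 2 + 2 * t * X ω) μ := hX2.add h1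
    rw [this, integral_add h2 (integrable_const _), integral_add hX2 h1,
      integral_const_mul, hmean, hvar]
    simp
  have hmarkov := mul_meas_ge_le_integral_of_nonneg
    (Filter.Eventually.of_forall fun ω => by positivity : 0 ≤ᵐ[μ] g) hg_int ((x + t) ^ 2)
  rw [hg_val] at hmarkov
  have hsub : {ω | x ≤ X ω} ⊆ {ω | (x + t) ^ 2 ≤ g ω} := by
    intro ω hω
    simp only [Set.mem_setOf_eq] at hω ⊢
    have h : x + t ≤ X ω + t := by linarith
    exact pow_le_pow_left₀ (by positivity) h 2
  have hmono : (μ {ω | x ≤ X ω}).toReal ≤ (μ {ω | (x + t) ^ 2 ≤ g ω}).toReal := by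
    apply ENNReal.toReal_mono (measure_ne_top μ _) (measure_mono hsub)
  have hxt : 0 < (x + t) ^ 2 := by positivity
  have key : (x + t) ^ 2 * (μ {ω | x ≤ X ω}).toReal ≤ 1 + t ^ 2 := by
    calc (x + t) ^ 2 * (μ {ω | x ≤ X ω}).toReal
        ≤ (x + t) ^ 2 * (μ {ω | (x + t) ^ 2 ≤ g ω}).toReal :=
          mul_le_mul_of_nonneg_left hmono (le_of_lt hxt)
      _ ≤ 1 + t ^ 2 := hmarkov
  have key' : (μ {ω | x ≤ X ω}).toReal * (x + t) ^ 2 ≤ 1 + t ^ 2 := by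
    rw [mul_comm]; exact key
  calc (μ {ω | x ≤ X ω}).toReal ≤ (1 + t ^ 2) / (x + t) ^ 2 := (le_div_iff₀ hxt).mpr key'
    _ = 1 / (1 + x ^ 2) := by
        rw [ht]; field_simp; ring

end PhiAux

open PhiAux in
theorem stmt_16 {Ω : Type*} [MeasureSpace Ω] (μ : Measure Ω) [IsProbabilityMeasure μ]
    (X : Ω → ℝ) (hXm : Measurable X)
    (hX : Integrable X μ) (hmean : ∫ ω, X ω ∂μ = 0)
    (hX2 : Integrable (fun ω => X ω ^ 2) μ) (hvar : ∫ ω, X ω ^ 2 ∂μ = 1)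
    (x : ℝ) :
    |(μ {ω | X ω < x}).toReal - Phi x| ≤
      sSup {y : ℝ | ∃ z > 0, y = Phi z - z ^ 2 / (1 + z ^ 2)} := by
  set S := {y : ℝ | ∃ z > 0, y = Phi z - z ^ 2 / (1 + z ^ 2)} with hS
  set P := (μ {ω | X ω < x}).toReal with hP
  have hP0 : 0 ≤ P := ENNReal.toReal_nonneg
  have hP1 : P ≤ 1 := by
    rw [hP]
    exact ENNReal.toReal_le_of_le_ofReal (by norm_num) (by simpa using prob_le_one)
  have hhalf := sSup_ge_half
  rw [abs_sub_le_iff]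
  rcases lt_trichotomy x 0 with hx | hx | hx
  · -- x < 0
    constructor
    · -- P - Phi x ≤ sSup
      have hcant : (μ {ω | -x ≤ -X ω}).toReal ≤ 1 / (1 + (-x) ^ 2) :=
        cantelli μ (fun ω => -X ω) hXm.neg hX.neg (by rw [integral_neg, hmean]; ring)
          (by simpa using hX2) (by simpa using hvar) (by linarith)
      have hsub : {ω | X ω < x} ⊆ {ω | -x ≤ -X ω} := fun ω hω => by
        simp only [Set.mem_setOf_eq] at hω ⊢; linarith
      have hPle : P ≤ 1 / (1 + x ^ 2) := by
        calc P ≤ (μ {ω | -x ≤ -X ω}).toReal :=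
            ENNReal.toReal_mono (measure_ne_top μ _) (measure_mono hsub)
          _ ≤ 1 / (1 + (-x) ^ 2) := hcant
          _ = 1 / (1 + x ^ 2) := by ring_nf
      have hsymm : Phi x = 1 - Phi (-x) := by
        have := Phi_symm x; linarith
      have hmem : Phi (-x) - (-x) ^ 2 / (1 + (-x) ^ 2) ∈ S := ⟨-x, by linarith, rfl⟩
      have hle : P - Phi x ≤ Phi (-x) - (-x) ^ 2 / (1 + (-x) ^ 2) := by
        rw [hsymm]
        have : (-x) ^ 2 / (1 + (-x) ^ 2) = 1 - 1 / (1 + x ^ 2) := by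
          field_simp; try ring
        rw [this]; linarith
      exact le_trans hle (le_csSup bddAbove_S hmem)
    · -- Phi x - P ≤ sSup
      have : Phi x ≤ 1/2 := by
        calc Phi x ≤ Phi 0 := Phi_mono (le_of_lt hx)
          _ = 1/2 := Phi_zero
      linarith
  · -- x = 0
    subst hx
    rw [Phi_zero]
    constructor <;> linarith
  · -- x > 0
    constructor
    · -- P - Phi x ≤ sSup
      have : Phi (-x) ≤ 1/2 := by
        calc Phi (-x) ≤ Phi 0 := Phi_mono (by linarith)
          _ = 1/2 := Phi_zero
      have hsymm := Phi_symm x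
      linarith
    · -- Phi x - P ≤ sSup
      have hcant : (μ {ω | x ≤ X ω}).toReal ≤ 1 / (1 + x ^ 2) :=
        cantelli μ X hXm hX hmean hX2 hvar hx
      have hcompl : P = 1 - (μ {ω | x ≤ X ω}).toReal := by
        have hmeas : MeasurableSet {ω | X ω < x} := hXm measurableSet_Iio
        have : μ {ω | x ≤ X ω} = 1 - μ {ω | X ω < x} := by
          rw [show {ω | x ≤ X ω} = {ω | X ω < x}ᶜ from by ext ω; simp [not_lt],
            measure_compl hmeas (measure_ne_top μ _), measure_univ]
        rw [hP, this]
        rw [ENNReal.toReal_sub_of_le (by simpa using prob_le_one) (by norm_num)]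
        simp
      have hmem : Phi x - x ^ 2 / (1 + x ^ 2) ∈ S := ⟨x, hx, rfl⟩
      have hle : Phi x - P ≤ Phi x - x ^ 2 / (1 + x ^ 2) := by
        rw [hcompl]
        have hxx : x ^ 2 / (1 + x ^ 2) = 1 - 1 / (1 + x ^ 2) := by
          field_simp
          ring
        rw [hxx]; linarith
      exact le_trans hle (le_csSup bddAbove_S hmem)
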